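/- Convergence of the one-step-gradient Uzawa Double Ritz iteration (Theorem 3.3). Let (r*, u*) be a saddle point. Fix 0 < α < 1, 0 < ω < 1, and 0 < τ < 2/M², and set τ̃ := τω/(1 + ω). Given r⁰ ∈ V and u⁰, u¹ ∈ U with u¹ = u⁰ + τ̃ R_U⁻¹B†r⁰, define for k ≥ 1: rᵏ := rᵏ⁻¹ − α(rᵏ⁻¹ − R_V⁻¹(ℓ − Buᵏ)) and uᵏ⁺¹ := uᵏ + τ̃ R_U⁻¹B†rᵏ. Then rᵏ − r* → 0 in V and uᵏ − u* → 0 in U as k → ∞. -/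

import Mathlib

open scoped RealInnerProductSpace
open Filter


private lemma uzawa_step_scalar (α κ A Vn Q R Sn : ℝ) (hα0 : 0 < α) (hα1 : α < 1)
    (hκ0 : 0 < κ) (hκ1 : κ < 1) (hA : 0 ≤ A) (hV : 0 ≤ Vn) (hQ0 : 0 ≤ Q) (hS0 : 0 ≤ Sn)
    (hQ : Q ≤ κ * Vn) (hS : Sn ≤ κ * A) (hR : R ^ 2 ≤ Q * Sn) :
    -(α*A) + (1-α)^2*Q - 2*α*(1-α)*R + α^2*Sn - (2-α)*Vn ≤ -(α*(1-κ))*(A+Vn) := by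
  have hRR : R ^ 2 ≤ κ ^ 2 * A * Vn := by nlinarith
  have hL0 : 0 ≤ κ*(α^2*A + Vn) := by positivity
  have h1 : -(2*α*R) ≤ κ*(α^2*A + Vn) := by
    nlinarith [sq_nonneg (κ*(α^2*A - Vn)),
      mul_le_mul_of_nonneg_left hRR (by positivity : (0:ℝ) ≤ 4*α^2)]
  have hβ : (0:ℝ) ≤ 1 - α := by linarith
  have h2 := mul_le_mul_of_nonneg_left h1 hβ
  have hQ' := mul_le_mul_of_nonneg_left hQ (sq_nonneg (1-α))
  have hS' := mul_le_mul_of_nonneg_left hS (sq_nonneg α)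
  have t1 : 0 ≤ κ*α*(1-α)^2*A := by positivity
  have hk2 : 0 ≤ 2 - κ*(2-α) := by nlinarith
  have t2 : 0 ≤ (1-α)*(2 - κ*(2-α))*Vn := by positivity
  nlinarith [h2, hQ', hS', t1, t2]

private lemma uzawa_geom_rec {β : ℝ} (hβ0 : 0 ≤ β) (hβ1 : β < 1) {a b : ℕ → ℝ}
    (ha : ∀ k, 0 ≤ a k) (hrec : ∀ k, a (k+1) ≤ β * a k + b k)
    (hb : Tendsto b atTop (nhds 0)) : Tendsto a atTop (nhds 0) := by
  rw [Metric.tendsto_atTop]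
  intro ε hε
  have hεβ : 0 < ε/2*(1-β) := by
    have : 0 < 1 - β := by linarith
    positivity
  rcases Metric.tendsto_atTop.mp hb (ε/2*(1-β)) hεβ with ⟨N, hN⟩
  have hN' : ∀ n ≥ N, |b n| < ε/2*(1-β) := fun n hn => by
    simpa [Real.dist_eq] using hN n hn
  have key : ∀ j, a (N + j) ≤ β ^ j * a N + ε/2 := by
    intro j
    induction j with
    | zero => simp; positivity
    | succ j ih =>
      have h1 : a (N + j + 1) ≤ β * a (N + j) + b (N + j) := hrec (N + j)
      have h2 : b (N + j) ≤ ε/2*(1-β) := le_of_lt (lt_of_abs_lt (hN' (N+j) (Nat.le_add_right _ _)))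
      have h3 : β * a (N + j) ≤ β * (β ^ j * a N + ε/2) := mul_le_mul_of_nonneg_left ih hβ0
      have h4 : β * (β ^ j * a N) = β ^ (j+1) * a N := by ring
      have h0 : a (N + (j+1)) = a (N + j + 1) := by ring_nf
      rw [h0]
      nlinarith [ha N]
  have hpow : Tendsto (fun j => β ^ j * a N) atTop (nhds 0) := by
    simpa using (tendsto_pow_atTop_nhds_zero_of_lt_one hβ0 hβ1).mul_const (a N)
  rcases eventually_atTop.mp (hpow.eventually (gt_mem_nhds (by positivity : (0:ℝ) < ε/2))) with ⟨J, hJ⟩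
  refine ⟨N + J, fun n hn => ?_⟩
  have hnN : N ≤ n := le_trans (Nat.le_add_right _ _) hn
  have hdecomp : n = N + (n - N) := by omega
  have hJn : J ≤ n - N := by omega
  have h6 := key (n - N)
  rw [← hdecomp] at h6
  have h5 : β ^ (n-N) * a N < ε/2 := hJ (n-N) hJn
  rw [Real.dist_eq, sub_zero, abs_of_nonneg (ha n)]
  linarith

set_option maxHeartbeats 1000000 in
/-- Convergence of the one-step-gradient Uzawa Double Ritz iteration (Theorem 3.3). -/
theorem uzawa_double_ritz_one_step_gradient_convergence
    {U V : Type*}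
    [NormedAddCommGroup U] [InnerProductSpace ℝ U] [CompleteSpace U]
    [NormedAddCommGroup V] [InnerProductSpace ℝ V] [CompleteSpace V]
    (B : U →L[ℝ] V →L[ℝ] ℝ) (ℓ : V →L[ℝ] ℝ) (m M : ℝ)
    (hm : 0 < m) (hmM : m ≤ M)
    (hBlow : ∀ x : U, m * ‖x‖ ≤ ‖B x‖) (hBup : ∀ x : U, ‖B x‖ ≤ M * ‖x‖)
    (rstar : V) (ustar : U)
    (hsad1 : ∀ v : V, ⟪rstar, v⟫ + B ustar v = ℓ v)
    (hsad2 : ∀ w : U, B w rstar = 0)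
    (α ω τ : ℝ) (hα0 : 0 < α) (hα1 : α < 1) (hω0 : 0 < ω) (hω1 : ω < 1)
    (hτ0 : 0 < τ) (hτ2 : τ < 2 / M ^ 2)
    (τt : ℝ) (hτt : τt = τ * ω / (1 + ω))
    (r : ℕ → V) (u : ℕ → U)
    (hu1 : u 1 = u 0 + τt • (InnerProductSpace.toDual ℝ U).symm (B.flip (r 0)))
    (hr : ∀ k : ℕ, r (k + 1) = r k - α •
      (r k - (InnerProductSpace.toDual ℝ V).symm (ℓ - B (u (k + 1)))))
    (hu : ∀ k : ℕ, u (k + 2) = u (k + 1) +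
      τt • (InnerProductSpace.toDual ℝ U).symm (B.flip (r (k + 1)))) :
    Tendsto (fun k => r k - rstar) atTop (nhds 0) ∧
      Tendsto (fun k => u k - ustar) atTop (nhds 0) := by
  have hM0 : 0 < M := lt_of_lt_of_le hm hmM
  have hω1p : (0:ℝ) < 1 + ω := by linarith
  have hτt0 : 0 < τt := by rw [hτt]; positivity
  have hκ1 : τt * M^2 < 1 := by
    have h2 : τ * M^2 < 2 := (lt_div_iff₀ (by positivity)).mp hτ2
    rw [hτt, div_mul_eq_mul_div, div_lt_one hω1p]
    nlinarith [mul_lt_mul_of_pos_right h2 hω0]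
  set S : U → V := fun w => (InnerProductSpace.toDual ℝ V).symm (B w) with hSdef
  set T : V → U := fun v => (InnerProductSpace.toDual ℝ U).symm (B.flip v) with hTdef
  have hSip : ∀ w v, ⟪S w, v⟫ = B w v := by
    intro w v; rw [hSdef]; exact InnerProductSpace.toDual_symm_apply
  have hTip : ∀ v w, ⟪T v, w⟫ = B w v := by
    intro v w; rw [hTdef]
    rw [show ((fun v => (InnerProductSpace.toDual ℝ U).symm (B.flip v)) v) =
      (InnerProductSpace.toDual ℝ U).symm (B.flip v) from rfl]
    rw [InnerProductSpace.toDual_symm_apply, ContinuousLinearMap.flip_apply]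
  have hSnorm : ∀ w, ‖S w‖ = ‖B w‖ := fun w => by rw [hSdef]; exact LinearIsometryEquiv.norm_map _ _
  have hSlow : ∀ w, m * ‖w‖ ≤ ‖S w‖ := fun w => by rw [hSnorm]; exact hBlow w
  have hTnorm : ∀ v, ‖T v‖ ≤ M * ‖v‖ := by
    intro v
    rw [hTdef]
    show ‖(InnerProductSpace.toDual ℝ U).symm (B.flip v)‖ ≤ M * ‖v‖
    rw [LinearIsometryEquiv.norm_map]
    refine ContinuousLinearMap.opNorm_le_bound _ (by positivity) (fun w => ?_)
    rw [ContinuousLinearMap.flip_apply]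
    calc ‖B w v‖ ≤ ‖B w‖ * ‖v‖ := (B w).le_opNorm v
      _ ≤ M * ‖v‖ * ‖w‖ := by nlinarith [hBup w, norm_nonneg v, norm_nonneg (B w), norm_nonneg w]
  have hSadd : ∀ w w', S (w + w') = S w + S w' := fun w w' => by simp [hSdef]
  have hSsub : ∀ w w', S (w - w') = S w - S w' := fun w w' => by simp [hSdef]
  have hSsmul : ∀ (c : ℝ) w, S (c • w) = c • S w := fun c w => by simp [hSdef]
  have hTadd : ∀ v v', T (v + v') = T v + T v' := fun v v' => by simp [hTdef]
  have hTsub : ∀ v v', T (v - v') = T v - T v' := fun v v' => by simp [hTdef]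
  have hTsmul : ∀ (c : ℝ) v, T (c • v) = c • T v := fun c v => by simp [hTdef]
  set G : V → V := fun v => τt • S (T v) with hGdef
  have hGadd : ∀ v v', G (v + v') = G v + G v' := fun v v' => by
    simp only [hGdef]; rw [hTadd, hSadd, smul_add]
  have hGsub : ∀ v v', G (v - v') = G v - G v' := fun v v' => by
    simp only [hGdef]; rw [hTsub, hSsub, smul_sub]
  have hGsmul : ∀ (c : ℝ) v, G (c • v) = c • G v := fun c v => by
    simp only [hGdef]; rw [hTsmul, hSsmul, smul_comm]
  have hGip : ∀ v v', ⟪G v, v'⟫ = τt * ⟪T v, T v'⟫ := by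
    intro v v'
    simp only [hGdef]
    rw [real_inner_smul_left, hSip, ← hTip v' (T v), real_inner_comm]
  have hGsym : ∀ v v', ⟪G v, v'⟫ = ⟪G v', v⟫ := fun v v' => by
    rw [hGip, hGip, real_inner_comm]
  have hGself : ∀ v, ⟪G v, v⟫ = τt * ‖T v‖^2 := fun v => by
    rw [hGip, real_inner_self_eq_norm_sq]
  have hGpos : ∀ v, 0 ≤ ⟪G v, v⟫ := fun v => by rw [hGself]; positivity
  have hGk : ∀ v, ⟪G v, v⟫ ≤ (τt * M^2) * ‖v‖^2 := by
    intro v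
    rw [hGself]
    have h2 : ‖T v‖^2 ≤ (M*‖v‖)^2 := pow_le_pow_left₀ (norm_nonneg _) (hTnorm v) 2
    nlinarith [hτt0, h2]
  have hGcs : ∀ v v', ⟪G v, v'⟫^2 ≤ ⟪G v, v⟫ * ⟪G v', v'⟫ := by
    intro v v'
    rw [hGip, hGip, hGip, real_inner_self_eq_norm_sq, real_inner_self_eq_norm_sq]
    have h := abs_real_inner_le_norm (T v) (T v')
    have h2 : ⟪T v, T v'⟫^2 ≤ (‖T v‖ * ‖T v'‖)^2 := by
      rw [← sq_abs]
      exact pow_le_pow_left₀ (abs_nonneg _) h 2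
    nlinarith [sq_nonneg τt]
  have hGnorm : ∀ v, τt * m * ‖T v‖ ≤ ‖G v‖ := by
    intro v
    have h1 : ‖G v‖ = τt * ‖S (T v)‖ := by
      simp only [hGdef]; rw [norm_smul, Real.norm_eq_abs, abs_of_pos hτt0]
    rw [h1]
    nlinarith [hSlow (T v), hτt0]
  -- sequences
  set d : ℕ → U := fun k => u k - ustar with hddef
  set e : ℕ → V := fun k => r k - rstar with hedef
  set x : ℕ → V := fun k => S (d k) with hxdef
  have hTr : T rstar = 0 := by
    apply ext_inner_right ℝ
    intro w
    rw [hTip, hsad2 w, inner_zero_left]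
  have hu' : ∀ k, u (k+1) = u k + τt • T (r k) := by
    intro k
    cases k with
    | zero => rw [hTdef]; exact hu1
    | succ n => rw [hTdef]; exact hu n
  have hTe : ∀ k, T (r k) = T (e k) := by
    intro k
    have h : r k = e k + rstar := by simp [hedef]
    rw [h, hTadd, hTr, add_zero]
  have hd : ∀ k, d (k+1) = d k + τt • T (e k) := by
    intro k
    simp only [hddef]
    rw [hu' k, hTe k]
    abel
  have hx' : ∀ k, x (k+1) = x k + G (e k) := by
    intro k
    simp only [hxdef]
    rw [hd k, hSadd, hSsmul]
  have hres : ∀ k, (InnerProductSpace.toDual ℝ V).symm (ℓ - B (u k)) = rstar - x k := by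
    intro k
    apply ext_inner_right ℝ
    intro v
    rw [InnerProductSpace.toDual_symm_apply, inner_sub_left]
    have hxv : ⟪x k, v⟫ = B (u k) v - B ustar v := by
      simp only [hxdef]
      rw [hSip]
      simp only [hddef]
      rw [map_sub]
      simp [ContinuousLinearMap.sub_apply]
    simp only [ContinuousLinearMap.sub_apply]
    rw [hxv, ← hsad1 v]
    ring
  have he : ∀ k, e (k+1) = (1-α) • e k - α • x (k+1) := by
    intro k
    simp only [hedef]
    rw [hr k, hres (k+1)]
    module
  -- heavy-ball system
  set X : ℕ → V := fun k => x (k+1) with hXdef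
  set w : ℕ → V := fun k => G (e k) with hwdef
  have hXrec : ∀ k, X (k+1) = X k + w (k+1) := by
    intro k; simp only [hXdef, hwdef]; exact hx' (k+1)
  have hwrec : ∀ k, w (k+1) = (1-α) • w k - α • G (X k) := by
    intro k
    simp only [hwdef, hXdef]
    rw [he k, hGsub, hGsmul, hGsmul]
  set E : ℕ → ℝ := fun k => ⟪G (X k), X k⟫ + (1/α) * ‖w k‖^2 with hEdef
  have hE0 : ∀ k, 0 ≤ E k := by
    intro k
    simp only [hEdef]
    exact add_nonneg (hGpos _) (by positivity)
  have hαne : α ≠ 0 := ne_of_gt hα0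
  have hstep : ∀ k, E (k+1) ≤ E k - (α*(1-(τt*M^2))) * (‖G (X k)‖^2 + ‖w k‖^2) := by
    intro k
    have hw' : w (k+1) = (1-α) • w k - α • G (X k) := hwrec k
    have hX' : X (k+1) = X k + w (k+1) := hXrec k
    have hGX' : G (X (k+1)) = G (X k) + ((1-α) • G (w k) - α • G (G (X k))) := by
      rw [hX', hw', hGadd, hGsub, hGsmul (1-α) (w k), hGsmul α (G (X k))]
    have nsq : ∀ z : V, ‖z‖^2 = ⟪z, z⟫ := fun z => (real_inner_self_eq_norm_sq z).symm
    have e1 : ⟪G (X (k+1)), X (k+1)⟫ = ⟪G (X k), X k⟫ + 2*((1-α)*⟪G (X k), w k⟫ - α*‖G (X k)‖^2)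
        + ((1-α)^2*⟪G (w k), w k⟫ - 2*α*(1-α)*⟪G (w k), G (X k)⟫ + α^2*⟪G (G (X k)), G (X k)⟫) := by
      rw [hGX', hX', hw']
      simp only [inner_add_left, inner_add_right, inner_sub_left, inner_sub_right,
        real_inner_smul_left, real_inner_smul_right]
      rw [hGsym (w k) (X k), hGsym (G (X k)) (X k), hGsym (G (X k)) (w k),
        real_inner_self_eq_norm_sq]
      ring
    have e2 : ‖w (k+1)‖^2 = (1-α)^2*‖w k‖^2 - 2*α*(1-α)*⟪G (X k), w k⟫ + α^2*‖G (X k)‖^2 := by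
      rw [hw', nsq ((1-α) • w k - α • G (X k))]
      simp only [inner_sub_left, inner_sub_right, real_inner_smul_left, real_inner_smul_right]
      rw [real_inner_comm (G (X k)) (w k), real_inner_self_eq_norm_sq, real_inner_self_eq_norm_sq]
      ring
    have scalar := uzawa_step_scalar α (τt*M^2) (‖G (X k)‖^2) (‖w k‖^2)
      (⟪G (w k), w k⟫) (⟪G (w k), G (X k)⟫) (⟪G (G (X k)), G (X k)⟫)
      hα0 hα1 (mul_pos hτt0 (pow_pos hM0 2)) hκ1 (by positivity) (by positivity)
      (hGpos (w k)) (hGpos (G (X k)))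
      (hGk (w k)) (hGk (G (X k)))
      (hGcs (w k) (G (X k)))
    have expand : E (k+1) = E k + (-(α*‖G (X k)‖^2) + (1-α)^2*⟪G (w k), w k⟫
        - 2*α*(1-α)*⟪G (w k), G (X k)⟫ + α^2*⟪G (G (X k)), G (X k)⟫ - (2-α)*‖w k‖^2) := by
      simp only [hEdef]
      rw [e1, e2]
      field_simp
      ring
    rw [expand]
    linarith [scalar]
  -- summability and convergence of the core quantities
  have hδ0 : (0:ℝ) < α*(1-(τt*M^2)) := mul_pos hα0 (by linarith)
  set c : ℕ → ℝ := fun k => ‖G (X k)‖^2 + ‖w k‖^2 with hcdef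
  have hc0 : ∀ k, 0 ≤ c k := fun k => by simp only [hcdef]; positivity
  have hsum : ∀ n, ∑ i ∈ Finset.range n, (α*(1-(τt*M^2))) * c i ≤ E 0 := by
    intro n
    have h : ∀ nn, ∑ i ∈ Finset.range nn, (α*(1-(τt*M^2))) * c i ≤ E 0 - E nn := by
      intro nn
      induction nn with
      | zero => simp
      | succ nn ih =>
        rw [Finset.sum_range_succ]
        have h2 := hstep nn
        simp only [hcdef] at *
        linarith
    linarith [h n, hE0 n]
  have hsummable : Summable (fun k => (α*(1-(τt*M^2))) * c k) :=
    summable_of_sum_range_le (fun n => mul_nonneg hδ0.le (hc0 n)) hsum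
  have hctend : Tendsto c atTop (nhds 0) := by
    have h1 := hsummable.tendsto_atTop_zero
    have h2 := h1.const_mul (1/(α*(1-(τt*M^2))))
    simp only [mul_zero] at h2
    have h3 : (fun k => (1/(α*(1-(τt*M^2)))) * ((α*(1-(τt*M^2))) * c k)) = c := by
      funext k; have hne : (1 - τt*M^2) ≠ 0 := (by linarith : (0:ℝ) < 1 - τt*M^2).ne'; field_simp
    rwa [h3] at h2
  have hGX2 : Tendsto (fun k => ‖G (X k)‖^2) atTop (nhds 0) :=
    squeeze_zero (fun k => by positivity)
      (fun k => by simp only [hcdef]; exact le_add_of_nonneg_right (by positivity)) hctend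
  have hGXn : Tendsto (fun k => ‖G (X k)‖) atTop (nhds 0) := by
    have hsq : (fun k => Real.sqrt (‖G (X k)‖^2)) = fun k => ‖G (X k)‖ :=
      funext fun k => Real.sqrt_sq (norm_nonneg _)
    have h2 := (Real.continuous_sqrt.tendsto 0).comp hGX2
    simp only [Function.comp_def, Real.sqrt_zero] at h2
    rwa [hsq] at h2
  -- coercivity on the range of S
  have hcoer : ∀ w0 : U, (τt*m^2) * ‖S w0‖ ≤ ‖G (S w0)‖ := by
    intro w0
    have h1 : ⟪T (S w0), w0⟫ = ‖S w0‖^2 := by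
      rw [hTip (S w0) w0, ← hSip w0 (S w0), real_inner_self_eq_norm_sq]
    have h2 : ⟪T (S w0), w0⟫ ≤ ‖T (S w0)‖ * ‖w0‖ := real_inner_le_norm _ _
    have h3 : m * ‖w0‖ ≤ ‖S w0‖ := hSlow w0
    have h4 : m * ‖S w0‖ ≤ ‖T (S w0)‖ := by
      rcases eq_or_lt_of_le (norm_nonneg (S w0)) with h | h
      · rw [← h, mul_zero]; exact norm_nonneg _
      · have h5 : m * ‖S w0‖ * ‖S w0‖ ≤ ‖T (S w0)‖ * ‖S w0‖ := by
          nlinarith [norm_nonneg (T (S w0)), norm_nonneg w0]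
        exact le_of_mul_le_mul_right h5 h
    have h6 := hGnorm (S w0)
    have h7 := mul_le_mul_of_nonneg_left h4 (mul_nonneg hτt0.le hm.le)
    nlinarith [h6, h7]
  have hXx : ∀ k, X k = S (d (k+1)) := fun k => by simp only [hXdef, hxdef]
  have hXtend : Tendsto (fun k => ‖X k‖) atTop (nhds 0) := by
    refine squeeze_zero (fun k => norm_nonneg _) (g := fun k => (1/(τt*m^2)) * ‖G (X k)‖) ?_ ?_
    · intro k
      have hc' : (0:ℝ) < τt*m^2 := by positivity
      have h := hcoer (d (k+1))
      rw [← hXx k] at h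
      have h2 := mul_le_mul_of_nonneg_left h (le_of_lt (one_div_pos.mpr hc'))
      rw [show (1/(τt*m^2)) * ((τt*m^2) * ‖X k‖) = ‖X k‖ by field_simp] at h2
      exact h2
    · have h8 := hGXn.const_mul (1/(τt*m^2))
      rwa [mul_zero] at h8
  -- convergence of d
  have hdrec : ∀ k, ‖d (k+1)‖ ≤ (1/m) * ‖X k‖ := by
    intro k
    have h := hSlow (d (k+1))
    rw [← hXx k] at h
    have h2 := mul_le_mul_of_nonneg_left h (le_of_lt (one_div_pos.mpr hm))
    rw [show (1/m) * (m * ‖d (k+1)‖) = ‖d (k+1)‖ by field_simp] at h2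
    exact h2
  have hd2 : Tendsto (fun k => ‖d (k+1)‖) atTop (nhds 0) :=
    squeeze_zero (fun k => norm_nonneg _) hdrec (by have h9 := hXtend.const_mul (1/m); rwa [mul_zero] at h9)
  have hd3 : Tendsto (fun k => d (k+1)) atTop (nhds 0) := tendsto_zero_iff_norm_tendsto_zero.mpr hd2
  have hd4 : Tendsto d atTop (nhds 0) := (tendsto_add_atTop_iff_nat 1).mp hd3
  -- convergence of e
  have herec : ∀ k, ‖e (k+1)‖ ≤ (1-α) * ‖e k‖ + α * ‖X k‖ := by
    intro k
    rw [he k]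
    calc ‖(1-α) • e k - α • x (k+1)‖ ≤ ‖(1-α) • e k‖ + ‖α • x (k+1)‖ := norm_sub_le _ _
      _ = (1-α) * ‖e k‖ + α * ‖x (k+1)‖ := by
          rw [norm_smul, norm_smul, Real.norm_eq_abs, Real.norm_eq_abs,
            abs_of_pos hα0, abs_of_nonneg (by linarith : (0:ℝ) ≤ 1-α)]
      _ = (1-α) * ‖e k‖ + α * ‖X k‖ := by simp only [hXdef]
  have hetendn : Tendsto (fun k => ‖e k‖) atTop (nhds 0) :=
    uzawa_geom_rec (by linarith) (by linarith) (fun k => norm_nonneg _) herec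
      (by have h9 := hXtend.const_mul α; rwa [mul_zero] at h9)
  exact ⟨tendsto_zero_iff_norm_tendsto_zero.mpr hetendn, hd4⟩
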